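/- Let $\gamma\in(0,1]$. There exists a constant $C>0$ such that for all integers $m\ge 6$ and all $j$ with $3\le j\le \lfloor m/2\rfloor$, $$\frac{\binom{m}{j}\,((m-j-2)!)^{1/\gamma}\,((j-1)!)^{1/\gamma}}{((m-3)!)^{1/\gamma}\,\sqrt{m-3}\,\sqrt{m-j-2}} \le \frac{C}{j}.$$ -/

import Mathlib

lemma fact6 (b c : ℕ) : (b+c+6).factorial = (b+c+6)*((b+c+5)*((b+c+4)*(b+c+3).factorial)) := by
  rw [show b+c+6 = (b+c+5)+1 from by omega, Nat.factorial_succ,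
      show b+c+5 = (b+c+4)+1 from by omega, Nat.factorial_succ,
      show b+c+4 = (b+c+3)+1 from by omega, Nat.factorial_succ]

lemma factb (b : ℕ) : (b+3).factorial = (b+3)*(b+2).factorial := by
  rw [show b+3 = (b+2)+1 from by omega, Nat.factorial_succ]

lemma factc (c : ℕ) : (c+3).factorial = (c+3)*((c+2)*(c+1).factorial) := by
  rw [show c+3 = (c+2)+1 from by omega, Nat.factorial_succ,
      show c+2 = (c+1)+1 from by omega, Nat.factorial_succ]

lemma key_id (b c : ℕ) :
    ((b+c+6).choose (b+3) : ℝ) * ((b:ℝ)+3) * (((c:ℝ)+3)*((c:ℝ)+2)) =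
    ((b+c+3).choose (b+2) : ℝ) * (((b:ℝ)+(c:ℝ)+6)*((b:ℝ)+(c:ℝ)+5)*((b:ℝ)+(c:ℝ)+4)) := by
  have h1 := Nat.choose_mul_factorial_mul_factorial (show b+3 ≤ b+c+6 by omega)
  have h2 := Nat.choose_mul_factorial_mul_factorial (show b+2 ≤ b+c+3 by omega)
  rw [show b+c+6-(b+3) = c+3 from by omega] at h1
  rw [show b+c+3-(b+2) = c+1 from by omega] at h2
  rw [fact6, factb, factc, ← h2] at h1
  have h1R := congrArg (Nat.cast : ℕ → ℝ) h1
  push_cast at h1R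
  refine mul_right_cancel₀ (show (((b+2).factorial : ℝ) * ((c+1).factorial : ℝ)) ≠ 0 by positivity) ?_
  linear_combination h1R


lemma hpoly_lem (b c : ℝ) (hb : 0 ≤ b) (hbc : b ≤ c) :
    (b+c+6)*(b+c+5)*(b+c+4) ≤ 100 * ((c+1) * ((c+3)*(c+2))) := by
  have hc : 0 ≤ c := le_trans hb hbc
  have s1 : (b+c+6)*(b+c+5) ≤ (2*c+6)*(2*c+6) :=
    mul_le_mul (by linarith) (by linarith) (by linarith) (by linarith)
  have s2 : (b+c+6)*(b+c+5)*(b+c+4) ≤ (2*c+6)*(2*c+6)*(2*c+6) :=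
    mul_le_mul s1 (by linarith) (by linarith) (by positivity)
  nlinarith [mul_nonneg hc hc, mul_nonneg (mul_nonneg hc hc) hc]

theorem stmt_3 (γ : ℝ) (hγ : γ ∈ Set.Ioc (0:ℝ) 1) :
    ∃ C > 0, ∀ m j : ℕ, 6 ≤ m → 3 ≤ j → j ≤ m / 2 →
      (m.choose j : ℝ) * ((Nat.factorial (m - j - 2) : ℝ) ^ (1/γ)) *
        ((Nat.factorial (j - 1) : ℝ) ^ (1/γ)) /
      (((Nat.factorial (m - 3) : ℝ) ^ (1/γ)) * Real.sqrt ((m:ℝ) - 3) *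
        Real.sqrt ((m:ℝ) - j - 2))
      ≤ C / j := by
  obtain ⟨hγ0, hγ1⟩ := hγ
  have hx1 : 1 ≤ 1/γ := by rw [le_div_iff₀ hγ0]; linarith
  refine ⟨100, by norm_num, ?_⟩
  intro m j hm hj hjm
  obtain ⟨b, rfl⟩ : ∃ b, j = b + 3 := ⟨j - 3, by omega⟩
  obtain ⟨c, hbc, rfl⟩ : ∃ c, b ≤ c ∧ m = b + c + 6 := ⟨m - b - 6, by omega, by omega⟩
  rw [show b + c + 6 - (b+3) - 2 = c + 1 from by omega,
      show b + 3 - 1 = b + 2 from by omega,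
      show b + c + 6 - 3 = b + c + 3 from by omega,
      show ((b+c+6:ℕ):ℝ) - 3 = ((b:ℝ)+(c:ℝ)+3) from by push_cast; ring,
      show ((b+c+6:ℕ):ℝ) - ((b+3:ℕ):ℝ) - 2 = ((c:ℝ)+1) from by push_cast; ring]
  set x := 1/γ with hxdef
  set A : ℝ := ((b+c+6).choose (b+3) : ℝ) with hA
  set B : ℝ := ((b+c+3).choose (b+2) : ℝ) with hB
  set F1 : ℝ := ((c+1).factorial : ℝ) with hF1
  set F2 : ℝ := ((b+2).factorial : ℝ) with hF2
  have hB1 : (1:ℝ) ≤ B := by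
    have := Nat.choose_pos (show b+2 ≤ b+c+3 by omega)
    exact Nat.one_le_cast.mpr this
  have hBpos : (0:ℝ) < B := by linarith
  have hF1pos : (0:ℝ) < F1 := by rw [hF1]; exact_mod_cast Nat.factorial_pos _
  have hF2pos : (0:ℝ) < F2 := by rw [hF2]; exact_mod_cast Nat.factorial_pos _
  have h2 := Nat.choose_mul_factorial_mul_factorial (show b+2 ≤ b+c+3 by omega)
  rw [show b+c+3-(b+2) = c+1 from by omega] at h2
  have hfact : ((b+c+3).factorial : ℝ) = B * F2 * F1 := by
    rw [hB, hF2, hF1]; exact_mod_cast h2.symm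
  rw [hfact, Real.mul_rpow (by positivity) hF1pos.le,
      Real.mul_rpow hBpos.le hF2pos.le]
  have hs1 : (0:ℝ) < Real.sqrt ((b:ℝ)+(c:ℝ)+3) := Real.sqrt_pos.mpr (by positivity)
  have hs2 : (0:ℝ) < Real.sqrt ((c:ℝ)+1) := Real.sqrt_pos.mpr (by positivity)
  have hBx : (0:ℝ) < B ^ x := Real.rpow_pos_of_pos hBpos x
  have hF1x : (0:ℝ) < F1 ^ x := Real.rpow_pos_of_pos hF1pos x
  have hF2x : (0:ℝ) < F2 ^ x := Real.rpow_pos_of_pos hF2pos x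
  have hjpos : (0:ℝ) < ((b+3:ℕ):ℝ) := by positivity
  rw [div_le_div_iff₀ (mul_pos (mul_pos (mul_pos (mul_pos hBx hF2x) hF1x) hs1) hs2) hjpos]
  have hbnn : (0:ℝ) ≤ (b:ℝ) := Nat.cast_nonneg b
  have hbcR : (b:ℝ) ≤ (c:ℝ) := by exact_mod_cast hbc
  have hcnn : (0:ℝ) ≤ (c:ℝ) := Nat.cast_nonneg c
  have hsqrt : ((c:ℝ)+1) ≤ Real.sqrt ((b:ℝ)+(c:ℝ)+3) * Real.sqrt ((c:ℝ)+1) := by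
    rw [← Real.sqrt_mul (by positivity)]
    exact (Real.le_sqrt (by positivity) (by positivity)).mpr (by nlinarith)
  have hBBx : B ≤ B ^ x := by
    calc B = B ^ (1:ℝ) := (Real.rpow_one B).symm
      _ ≤ B ^ x := Real.rpow_le_rpow_of_exponent_le hB1 hx1
  have hpoly := hpoly_lem (b:ℝ) (c:ℝ) hbnn hbcR
  have main : A * ((b+3:ℕ):ℝ) ≤ 100 * (B ^ x * (Real.sqrt ((b:ℝ)+(c:ℝ)+3) * Real.sqrt ((c:ℝ)+1))) := by
    rw [← mul_le_mul_iff_of_pos_right (show (0:ℝ) < ((c:ℝ)+3)*((c:ℝ)+2) by positivity)]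
    have hid : A * ((b+3:ℕ):ℝ) * (((c:ℝ)+3)*((c:ℝ)+2)) =
        B * (((b:ℝ)+(c:ℝ)+6)*((b:ℝ)+(c:ℝ)+5)*((b:ℝ)+(c:ℝ)+4)) := by
      rw [hA, hB]
      have hk := key_id b c
      push_cast at hk ⊢
      linear_combination hk
    rw [hid]
    calc B * (((b:ℝ)+(c:ℝ)+6)*((b:ℝ)+(c:ℝ)+5)*((b:ℝ)+(c:ℝ)+4))
        ≤ B ^ x * (100 * (((c:ℝ)+1) * (((c:ℝ)+3)*((c:ℝ)+2)))) :=
          mul_le_mul hBBx hpoly (by positivity) hBx.le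
      _ ≤ B ^ x * (100 * ((Real.sqrt ((b:ℝ)+(c:ℝ)+3) * Real.sqrt ((c:ℝ)+1)) * (((c:ℝ)+3)*((c:ℝ)+2)))) := by
          refine mul_le_mul_of_nonneg_left ?_ hBx.le
          refine mul_le_mul_of_nonneg_left ?_ (by norm_num)
          exact mul_le_mul_of_nonneg_right hsqrt (by positivity)
      _ = 100 * (B ^ x * (Real.sqrt ((b:ℝ)+(c:ℝ)+3) * Real.sqrt ((c:ℝ)+1))) * (((c:ℝ)+3)*((c:ℝ)+2)) := by
          ring
  calc A * F1 ^ x * F2 ^ x * ((b+3:ℕ):ℝ)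
      = (A * ((b+3:ℕ):ℝ)) * (F1 ^ x * F2 ^ x) := by ring
    _ ≤ (100 * (B ^ x * (Real.sqrt ((b:ℝ)+(c:ℝ)+3) * Real.sqrt ((c:ℝ)+1)))) * (F1 ^ x * F2 ^ x) :=
        mul_le_mul_of_nonneg_right main (mul_pos hF1x hF2x).le
    _ = 100 * (B ^ x * F2 ^ x * F1 ^ x * Real.sqrt ((b:ℝ)+(c:ℝ)+3) * Real.sqrt ((c:ℝ)+1)) := by
        ring
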